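/- With the setup of a graph covering by covers φₙ : Gₙ₊₁ → Gₙ, the induced map E_𝒢 : V_𝒢 → V_𝒢 is surjective. -/

import Mathlib

open CategoryTheory in

/-- Sequential König lemma: an inverse sequence of nonempty finite types has a
compatible sequence. -/
lemma seq_koenig (S : ℕ → Type) [∀ n, Finite (S n)] [∀ n, Nonempty (S n)]
    (f : ∀ n, S (n + 1) → S n) :
    ∃ x : ∀ n, S n, ∀ n, f n (x (n + 1)) = x n := by
  let F : ℕᵒᵖ ⥤ Type := CategoryTheory.Functor.ofOpSequence (fun n => TypeCat.ofHom (f n))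
  haveI : ∀ j : ℕᵒᵖ, Finite (F.obj j) := fun j => inferInstanceAs (Finite (S j.unop))
  haveI : ∀ j : ℕᵒᵖ, Nonempty (F.obj j) := fun j => inferInstanceAs (Nonempty (S j.unop))
  obtain ⟨u, hu⟩ := nonempty_sections_of_finite_inverse_system F
  refine ⟨fun n => u ⟨n⟩, fun n => ?_⟩
  have := hu (j := ⟨n + 1⟩) (j' := ⟨n⟩)
    (CategoryTheory.homOfLE (Nat.le_add_right n 1)).op
  rwa [CategoryTheory.Functor.ofOpSequence_map_homOfLE_succ] at this

/-- In the inverse limit of a graph covering, the induced map `E_𝒢` is surjective: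
every point has a predecessor. -/
theorem invLimit_surjective
    (V : ℕ → Type) [∀ n, Fintype (V n)] [∀ n, Nonempty (V n)]
    (E : ∀ n, Set (V n × V n)) (φ : ∀ n, V (n + 1) → V n)
    (h0 : ∀ a b : V 0, a = b) (hloop : ∀ v : V 0, (v, v) ∈ E 0)
    (hsurj : ∀ n (v : V n), (∃ u, (u, v) ∈ E n) ∧ ∃ w, (v, w) ∈ E n)
    (hhom : ∀ n (u v : V (n + 1)), (u, v) ∈ E (n + 1) → (φ n u, φ n v) ∈ E n)
    (hp : ∀ n (u v v' : V (n + 1)),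
      (u, v) ∈ E (n + 1) → (u, v') ∈ E (n + 1) → φ n v = φ n v')
    (hes : ∀ n (a b : V n), (a, b) ∈ E n →
      ∃ u v : V (n + 1), (u, v) ∈ E (n + 1) ∧ φ n u = a ∧ φ n v = b) :
    ∀ y : {x : ∀ n, V n // ∀ n, φ n (x (n + 1)) = x n},
      ∃ x : {x : ∀ n, V n // ∀ n, φ n (x (n + 1)) = x n},
        ∀ n, (x.1 n, y.1 n) ∈ E n := by
  intro y
  -- the types of predecessors of `y n`
  let S : ℕ → Type := fun n => {u : V n // (u, y.1 n) ∈ E n}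
  have : ∀ n, Nonempty (S n) := fun n => by
    obtain ⟨u, hu⟩ := (hsurj n (y.1 n)).1
    exact ⟨⟨u, hu⟩⟩
  have : ∀ n, Finite (S n) := fun n => Subtype.finite
  let f : ∀ n, S (n + 1) → S n := fun n u =>
    ⟨φ n u.1, by
      have := hhom n u.1 (y.1 (n + 1)) u.2
      rwa [y.2 n] at this⟩
  obtain ⟨x, hx⟩ := seq_koenig S f
  refine ⟨⟨fun n => (x n).1, fun n => ?_⟩, fun n => (x n).2⟩
  have := congrArg Subtype.val (hx n)
  exact this
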